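/- Let R be a commutative ring of prime characteristic p and let N be an R-module with an injective R-linear map φ : N → F^*N, where F^*N = R ⊗_{F, R} N is the Frobenius pullback. Let M := colim_e F^{e*}N be the colimit of the direct system N → F^*N → F^{2*}N → ⋯ whose transition maps are the Frobenius pullbacks F^{e*}φ. Then φ induces an R-linear isomorphism Φ : F^*M → M. -/

import Mathlib

open TensorProduct

universe u

/-- The Frobenius ring endomorphism `r ↦ r^p` of a commutative ring of characteristic `p`. -/
def frobHom (R : Type u) [CommRing R] (p : ℕ) [Fact p.Prime] [CharP R p] : R →+* R where
  toFun r := r ^ p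
  map_one' := one_pow p
  map_mul' x y := mul_pow x y p
  map_zero' := zero_pow (Fact.out (p := p.Prime)).ne_zero
  map_add' x y := add_pow_char x y p

/-- `R` viewed as an `R`-algebra via the Frobenius `r ↦ r^p`. -/
def FrobTwist (R : Type u) [CommRing R] (p : ℕ) [Fact p.Prime] [CharP R p] : Type u := R

instance FrobTwist.instCommRing (R : Type u) [CommRing R] (p : ℕ) [Fact p.Prime]
    [CharP R p] : CommRing (FrobTwist R p) := inferInstanceAs (CommRing R)

instance FrobTwist.instAlgebra (R : Type u) [CommRing R] (p : ℕ) [Fact p.Prime]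
    [CharP R p] : Algebra R (FrobTwist R p) := (frobHom R p).toAlgebra

/-- The Frobenius pullback `F^*X = R ⊗_{F,R} X`, the base change of `X` along the
Frobenius of `R`. -/
def FStarT (R : Type u) [CommRing R] (p : ℕ) [Fact p.Prime] [CharP R p]
    (X : Type u) [AddCommGroup X] [Module R X] : Type u :=
  TensorProduct R (FrobTwist R p) X

noncomputable instance FStarT.instAddCommGroup (R : Type u) [CommRing R] (p : ℕ) [Fact p.Prime]
    [CharP R p] (X : Type u) [AddCommGroup X] [Module R X] :
    AddCommGroup (FStarT R p X) :=
  inferInstanceAs (AddCommGroup (TensorProduct R (FrobTwist R p) X))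

/-- The `R`-module structure of `F^*X` (scalars acting through the target factor). -/
noncomputable instance FStarT.instModule (R : Type u) [CommRing R] (p : ℕ) [Fact p.Prime]
    [CharP R p] (X : Type u) [AddCommGroup X] [Module R X] : Module R (FStarT R p X) :=
  inferInstanceAs (Module (FrobTwist R p) (TensorProduct R (FrobTwist R p) X))

/-- Functoriality of the Frobenius pullback. -/
noncomputable def FStarT.map {R : Type u} [CommRing R] (p : ℕ) [Fact p.Prime] [CharP R p]
    {X Y : Type u} [AddCommGroup X] [Module R X] [AddCommGroup Y] [Module R Y]
    (f : X →ₗ[R] Y) : FStarT R p X →ₗ[R] FStarT R p Y where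
  toFun := LinearMap.baseChange (FrobTwist R p) f
  map_add' := (LinearMap.baseChange (FrobTwist R p) f).map_add
  map_smul' r x := (LinearMap.baseChange (FrobTwist R p) f).map_smul r x

/-- A bundled `R`-module. -/
structure ModBundle (R : Type u) [CommRing R] where
  carrier : Type u
  [acg : AddCommGroup carrier]
  [mod : Module R carrier]

attribute [instance] ModBundle.acg ModBundle.mod

/-- The directed system `e ↦ F^{e*}N` of iterated Frobenius pullbacks. -/
noncomputable def FPullData (R : Type u) [CommRing R] (p : ℕ) [Fact p.Prime] [CharP R p]
    (N : Type u) [AddCommGroup N] [Module R N] : ℕ → ModBundle R := fun e =>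
  Nat.rec ⟨N⟩ (fun _ ih => ⟨FStarT R p ih.carrier⟩) e

/-- `F^{e*}N`. -/
noncomputable def FPull (R : Type u) [CommRing R] (p : ℕ) [Fact p.Prime] [CharP R p]
    (N : Type u) [AddCommGroup N] [Module R N] (e : ℕ) : Type u :=
  (FPullData R p N e).carrier

noncomputable instance FPull.instAddCommGroup (R : Type u) [CommRing R] (p : ℕ) [Fact p.Prime]
    [CharP R p] (N : Type u) [AddCommGroup N] [Module R N] (e : ℕ) :
    AddCommGroup (FPull R p N e) := (FPullData R p N e).acg

noncomputable instance FPull.instModule (R : Type u) [CommRing R] (p : ℕ) [Fact p.Prime]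
    [CharP R p] (N : Type u) [AddCommGroup N] [Module R N] (e : ℕ) :
    Module R (FPull R p N e) := (FPullData R p N e).mod

/-- The transition maps `F^{e*}φ : F^{e*}N → F^{(e+1)*}N` of the direct system attached to
a root map `φ : N → F^*N`. -/
noncomputable def FPullMap (R : Type u) [CommRing R] (p : ℕ) [Fact p.Prime] [CharP R p]
    (N : Type u) [AddCommGroup N] [Module R N] (φ : N →ₗ[R] FStarT R p N) :
    ∀ e : ℕ, FPull R p N e →ₗ[R] FPull R p N (e + 1) := fun e =>
  Nat.rec (motive := fun e => FPull R p N e →ₗ[R] FPull R p N (e + 1)) φ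
    (fun _ ih => FStarT.map p ih) e

/-- The composite transition maps of the direct system. -/
noncomputable def FPullChain (R : Type u) [CommRing R] (p : ℕ) [Fact p.Prime] [CharP R p]
    (N : Type u) [AddCommGroup N] [Module R N] (φ : N →ₗ[R] FStarT R p N) :
    ∀ i j : ℕ, i ≤ j → (FPull R p N i →ₗ[R] FPull R p N j) := fun _ _ h =>
  Nat.leRecOn h (fun {k} g => (FPullMap R p N φ k).comp g) LinearMap.id
section Aux
variable {R N : Type u} [CommRing R] [AddCommGroup N] [Module R N]
  (p : ℕ) [Fact p.Prime] [CharP R p]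

def tw (R : Type u) [CommRing R] (p : ℕ) [Fact p.Prime] [CharP R p] (r : R) :
    FrobTwist R p := r

lemma FStarT_smul_tmul {X : Type u} [AddCommGroup X] [Module R X]
    (r : R) (a : FrobTwist R p) (x : X) (t : FStarT R p X) (h : t = a ⊗ₜ[R] x) :
    r • t = (tw R p r * a) ⊗ₜ[R] x := by
  subst h
  exact TensorProduct.smul_tmul' (tw R p r) a x

lemma frob_rel {X : Type u} [AddCommGroup X] [Module R X]
    (r : R) (a : FrobTwist R p) (x : X) :
    ((tw R p (frobHom R p r) * a) ⊗ₜ[R] x : TensorProduct R (FrobTwist R p) X)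
      = a ⊗ₜ[R] (r • x) := by
  rw [← smul_tmul]
  rfl

lemma FPull_succ (e : ℕ) : FPull R p N (e+1) = FStarT R p (FPull R p N e) := rfl

variable (φ : N →ₗ[R] FStarT R p N)

lemma FPullMap_succ (e : ℕ) :
    FPullMap R p N φ (e+1) = FStarT.map p (FPullMap R p N φ e) := rfl

lemma FPullChain_self (i : ℕ) : FPullChain R p N φ i i le_rfl = LinearMap.id := by
  unfold FPullChain
  exact Nat.leRecOn_self _

lemma FPullChain_succ (i j : ℕ) (h : i ≤ j) :
    FPullChain R p N φ i (j+1) (h.trans (Nat.le_succ j)) =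
      (FPullMap R p N φ j).comp (FPullChain R p N φ i j h) := by
  unfold FPullChain
  exact Nat.leRecOn_succ h _

end Aux
section Tw
variable {R N : Type u} [CommRing R] [AddCommGroup N] [Module R N]
  (p : ℕ) [Fact p.Prime] [CharP R p]
/-- The Frobenius-twisted module structure. -/
noncomputable def twMod (X : Type u) [AddCommGroup X] [Module R X] : Module R X :=
  Module.compHom X (frobHom R p)
end Tw
section Main
variable {R N : Type u} [CommRing R] [AddCommGroup N] [Module R N]
  (p : ℕ) [Fact p.Prime] [CharP R p] (φ : N →ₗ[R] FStarT R p N)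

lemma gmap_aux (a : FrobTwist R p) (e : ℕ) (r : R) (x : FPull R p N e) :
    Module.DirectLimit.of R ℕ (FPull R p N) (FPullChain R p N φ) (e+1) (a ⊗ₜ[R] (r • x))
      = (frobHom R p r) • Module.DirectLimit.of R ℕ (FPull R p N) (FPullChain R p N φ) (e+1)
          (a ⊗ₜ[R] x) := by
  erw [← frob_rel p r a x, ← map_smul]
  exact congrArg _ (FStarT_smul_tmul p (frobHom R p r) a x _ rfl).symm

noncomputable def gmap (a : FrobTwist R p) (e : ℕ) :
    @LinearMap R R _ _ (RingHom.id R) (FPull R p N e)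
      (Module.DirectLimit (FPull R p N) (FPullChain R p N φ)) _ _ _
      (twMod p (Module.DirectLimit (FPull R p N) (FPullChain R p N φ))) :=
  @LinearMap.mk R R _ _ (RingHom.id R) (FPull R p N e)
      (Module.DirectLimit (FPull R p N) (FPullChain R p N φ)) _ _ _
      (twMod p (Module.DirectLimit (FPull R p N) (FPullChain R p N φ)))
    { toFun := fun x =>
        Module.DirectLimit.of R ℕ (FPull R p N) (FPullChain R p N φ) (e+1) (a ⊗ₜ[R] x)
      map_add' := fun x y => by erw [tmul_add, map_add] }
    (fun r x => by exact gmap_aux p φ a e r x)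

lemma gmap_apply (a : FrobTwist R p) (e : ℕ) (x : FPull R p N e) :
    gmap p φ a e x
      = Module.DirectLimit.of R ℕ (FPull R p N) (FPullChain R p N φ) (e+1) (a ⊗ₜ[R] x) := rfl

end Main

section More
variable {R N : Type u} [CommRing R] [AddCommGroup N] [Module R N]
  (p : ℕ) [Fact p.Prime] [CharP R p] (φ : N →ₗ[R] FStarT R p N)

lemma of_step (e : ℕ) (x : FPull R p N e) :
    Module.DirectLimit.of R ℕ (FPull R p N) (FPullChain R p N φ) (e+1)
      (FPullMap R p N φ e x) =
    Module.DirectLimit.of R ℕ (FPull R p N) (FPullChain R p N φ) e x := by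
  have h : FPullMap R p N φ e x = FPullChain R p N φ e (e+1) (Nat.le_succ e) x := by
    rw [FPullChain_succ p φ e e le_rfl, FPullChain_self]
    rfl
  rw [h, Module.DirectLimit.of_f]

lemma gmap_step (a : FrobTwist R p) (e : ℕ) (x : FPull R p N e) :
    gmap p φ a (e+1) (FPullMap R p N φ e x) = gmap p φ a e x := by
  rw [gmap_apply, gmap_apply]
  have h : (a ⊗ₜ[R] (FPullMap R p N φ e x) : FStarT R p (FPull R p N (e+1)))
      = FPullMap R p N φ (e+1) (a ⊗ₜ[R] x) := rfl
  erw [h, of_step]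

lemma gmap_compat (a : FrobTwist R p) :
    ∀ (i j : ℕ) (hij : i ≤ j) x, gmap p φ a j (FPullChain R p N φ i j hij x) = gmap p φ a i x := by
  intro i j hij
  induction j, hij using Nat.le_induction with
  | base => intro x; rw [FPullChain_self]; rfl
  | succ j hij ih =>
    intro x
    rw [FPullChain_succ p φ i j hij, LinearMap.comp_apply, gmap_step, ih]

/-- For a fixed `a`, the lift of the maps `gmap a` to the direct limit. -/
noncomputable def FmapL (a : FrobTwist R p) :=
  @Module.DirectLimit.lift R _ ℕ _ (FPull R p N) _ _ (FPullChain R p N φ) _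
    (Module.DirectLimit (FPull R p N) (FPullChain R p N φ)) _
    (twMod p (Module.DirectLimit (FPull R p N) (FPullChain R p N φ)))
    (gmap p φ a) (gmap_compat p φ a)

/-- For a fixed `a`, the (Frobenius-semilinear) endomorphism `[x]ₑ ↦ [a ⊗ x]ₑ₊₁` of the
direct limit, as an additive map. -/
noncomputable def Fmap (a : FrobTwist R p) :
    Module.DirectLimit (FPull R p N) (FPullChain R p N φ) →+
      Module.DirectLimit (FPull R p N) (FPullChain R p N φ) :=
  AddMonoidHom.mk' (FmapL p φ a) (map_add (FmapL p φ a))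

lemma Fmap_of (a : FrobTwist R p) (e : ℕ) (x : FPull R p N e) :
    Fmap p φ a (Module.DirectLimit.of R ℕ (FPull R p N) (FPullChain R p N φ) e x) =
      Module.DirectLimit.of R ℕ (FPull R p N) (FPullChain R p N φ) (e+1) (a ⊗ₜ[R] x) := by
  exact @Module.DirectLimit.lift_of R _ ℕ _ (FPull R p N) _ _ (FPullChain R p N φ) _
    (Module.DirectLimit (FPull R p N) (FPullChain R p N φ)) _
    (twMod p (Module.DirectLimit (FPull R p N) (FPullChain R p N φ)))
    (gmap p φ a) (gmap_compat p φ a) e x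

end More
set_option maxHeartbeats 1000000
set_option synthInstance.maxHeartbeats 200000

section Phi
variable {R N : Type u} [CommRing R] [AddCommGroup N] [Module R N]
  (p : ℕ) [Fact p.Prime] [CharP R p] (φ : N →ₗ[R] FStarT R p N)

lemma tw_smul (r : R) (a : FrobTwist R p) :
    r • a = tw R p (frobHom R p r) * a := rfl

/-- The map `a ↦ ([x]ₑ ↦ [a ⊗ x]ₑ₊₁)` as a bundled additive map. -/
noncomputable def Fhom :
    FrobTwist R p →+
      (Module.DirectLimit (FPull R p N) (FPullChain R p N φ) →+
        Module.DirectLimit (FPull R p N) (FPullChain R p N φ)) where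
  toFun a := Fmap p φ a
  map_zero' := by
    ext z
    induction z using Module.DirectLimit.induction_on with
    | ih e x =>
      rw [Fmap_of]
      show Module.DirectLimit.of R ℕ (FPull R p N) (FPullChain R p N φ) (e+1)
          ((0 : FrobTwist R p) ⊗ₜ[R] x) = 0
      erw [zero_tmul, map_zero]
  map_add' a b := by
    ext z
    induction z using Module.DirectLimit.induction_on with
    | ih e x =>
      show Fmap p φ (a + b) (Module.DirectLimit.of R ℕ (FPull R p N) (FPullChain R p N φ) e x)
        = Fmap p φ a (Module.DirectLimit.of R ℕ (FPull R p N) (FPullChain R p N φ) e x)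
          + Fmap p φ b (Module.DirectLimit.of R ℕ (FPull R p N) (FPullChain R p N φ) e x)
      erw [Fmap_of, Fmap_of, Fmap_of, ← map_add, ← add_tmul]

lemma Fhom_balanced (r : R) (a : FrobTwist R p)
    (m : Module.DirectLimit (FPull R p N) (FPullChain R p N φ)) :
    Fhom p φ (r • a) m = Fhom p φ a (r • m) := by
  induction m using Module.DirectLimit.induction_on with
  | ih e x =>
    show Fmap p φ (r • a) (Module.DirectLimit.of R ℕ (FPull R p N) (FPullChain R p N φ) e x)
      = Fmap p φ a (r • Module.DirectLimit.of R ℕ (FPull R p N) (FPullChain R p N φ) e x)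
    erw [← map_smul, Fmap_of, Fmap_of, tw_smul, frob_rel]; rfl

/-- The induced additive map `F^*M →+ M`. -/
noncomputable def Phi0 :
    TensorProduct R (FrobTwist R p)
        (Module.DirectLimit (FPull R p N) (FPullChain R p N φ)) →+
      Module.DirectLimit (FPull R p N) (FPullChain R p N φ) :=
  TensorProduct.liftAddHom (Fhom p φ) (Fhom_balanced p φ)

lemma Phi0_tmul_of (a : FrobTwist R p) (e : ℕ) (x : FPull R p N e) :
    Phi0 p φ (a ⊗ₜ[R] Module.DirectLimit.of R ℕ (FPull R p N) (FPullChain R p N φ) e x)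
      = Module.DirectLimit.of R ℕ (FPull R p N) (FPullChain R p N φ) (e+1) (a ⊗ₜ[R] x) := by
  show Fmap p φ a (Module.DirectLimit.of R ℕ (FPull R p N) (FPullChain R p N φ) e x) = _
  rw [Fmap_of]

lemma Fmap_mul (r : R) (a : FrobTwist R p)
    (m : Module.DirectLimit (FPull R p N) (FPullChain R p N φ)) :
    Fmap p φ (tw R p r * a) m = r • Fmap p φ a m := by
  induction m using Module.DirectLimit.induction_on with
  | ih e x =>
    erw [Fmap_of, Fmap_of, ← map_smul]
    exact congrArg _ (FStarT_smul_tmul p r a x _ rfl).symm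

/-- The induced linear map `Φ : F^*M →ₗ[R] M`. -/
noncomputable def PhiL :
    FStarT R p (Module.DirectLimit (FPull R p N) (FPullChain R p N φ)) →ₗ[R]
      Module.DirectLimit (FPull R p N) (FPullChain R p N φ) where
  toFun := Phi0 p φ
  map_add' := (Phi0 p φ).map_add
  map_smul' r t := by
    induction t using TensorProduct.induction_on with
    | zero =>
      have h0 : r • (0 : FStarT R p (Module.DirectLimit (FPull R p N) (FPullChain R p N φ))) = 0 :=
        smul_zero r
      erw [h0, map_zero]; exact (smul_zero _).symm
    | tmul a m =>
      rw [FStarT_smul_tmul p r a m _ rfl]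
      show Fmap p φ (tw R p r * a) m = r • Phi0 p φ (a ⊗ₜ[R] m)
      rw [Fmap_mul]
      rfl
    | add u v hu hv =>
      erw [smul_add, map_add, hu, hv, map_add, smul_add]

end Phi
section Inv
variable {R N : Type u} [CommRing R] [AddCommGroup N] [Module R N]
  (p : ℕ) [Fact p.Prime] [CharP R p] (φ : N →ₗ[R] FStarT R p N)

lemma FStarT_map_tmul {X Y : Type u} [AddCommGroup X] [Module R X] [AddCommGroup Y] [Module R Y]
    (f : X →ₗ[R] Y) (a : FrobTwist R p) (x : X) :
    FStarT.map p f (a ⊗ₜ[R] x) = a ⊗ₜ[R] f x := rfl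

lemma FStarT_map_map {X Y Z : Type u} [AddCommGroup X] [Module R X] [AddCommGroup Y] [Module R Y]
    [AddCommGroup Z] [Module R Z] (f : Y →ₗ[R] Z) (g : X →ₗ[R] Y) (w : FStarT R p X) :
    FStarT.map p f (FStarT.map p g w) = FStarT.map p (f.comp g) w := by
  induction w using TensorProduct.induction_on with
  | zero => erw [map_zero]
  | tmul a x => rfl
  | add u v hu hv => erw [map_add, map_add, map_add, hu, hv]

/-- The level-`e` component `F^{e*}N → F^*M` of the inverse map. -/
noncomputable def invComp (e : ℕ) :
    FPull R p N e →ₗ[R]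
      FStarT R p (Module.DirectLimit (FPull R p N) (FPullChain R p N φ)) :=
  (FStarT.map p (Module.DirectLimit.of R ℕ (FPull R p N) (FPullChain R p N φ) e)).comp
    (FPullMap R p N φ e)

lemma invComp_step (e : ℕ) (x : FPull R p N e) :
    invComp p φ (e+1) (FPullMap R p N φ e x) = invComp p φ e x := by
  show FStarT.map p (Module.DirectLimit.of R ℕ (FPull R p N) (FPullChain R p N φ) (e+1))
      (FPullMap R p N φ (e+1) (FPullMap R p N φ e x))
    = FStarT.map p (Module.DirectLimit.of R ℕ (FPull R p N) (FPullChain R p N φ) e)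
      (FPullMap R p N φ e x)
  have h1 : FPullMap R p N φ (e+1) (FPullMap R p N φ e x)
      = FStarT.map p (FPullMap R p N φ e) (FPullMap R p N φ e x) := rfl
  erw [h1, FStarT_map_map]
  have h2 : (Module.DirectLimit.of R ℕ (FPull R p N) (FPullChain R p N φ) (e+1)).comp
      (FPullMap R p N φ e) = Module.DirectLimit.of R ℕ (FPull R p N) (FPullChain R p N φ) e := by
    apply LinearMap.ext
    intro y
    exact of_step p φ e y
  rw [h2]

lemma invComp_compat :
    ∀ (i j : ℕ) (hij : i ≤ j) x,
      invComp p φ j (FPullChain R p N φ i j hij x) = invComp p φ i x := by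
  intro i j hij
  induction j, hij using Nat.le_induction with
  | base => intro x; rw [FPullChain_self]; rfl
  | succ j hij ih =>
    intro x
    rw [FPullChain_succ p φ i j hij, LinearMap.comp_apply, invComp_step, ih]

/-- The inverse map `M →ₗ[R] F^*M`. -/
noncomputable def PhiInv :
    Module.DirectLimit (FPull R p N) (FPullChain R p N φ) →ₗ[R]
      FStarT R p (Module.DirectLimit (FPull R p N) (FPullChain R p N φ)) :=
  Module.DirectLimit.lift R ℕ (FPull R p N) (FPullChain R p N φ)
    (invComp p φ) (invComp_compat p φ)

lemma PhiInv_of (e : ℕ) (x : FPull R p N e) :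
    PhiInv p φ (Module.DirectLimit.of R ℕ (FPull R p N) (FPullChain R p N φ) e x)
      = FStarT.map p (Module.DirectLimit.of R ℕ (FPull R p N) (FPullChain R p N φ) e)
          (FPullMap R p N φ e x) :=
  Module.DirectLimit.lift_of _ _ _

lemma PhiL_map_of (e : ℕ) (w : FStarT R p (FPull R p N e)) :
    PhiL p φ (FStarT.map p (Module.DirectLimit.of R ℕ (FPull R p N) (FPullChain R p N φ) e) w)
      = Module.DirectLimit.of R ℕ (FPull R p N) (FPullChain R p N φ) (e+1) w := by
  induction w using TensorProduct.induction_on with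
  | zero => erw [map_zero, map_zero]
  | tmul a x =>
    rw [FStarT_map_tmul]
    exact Phi0_tmul_of p φ a e x
  | add u v hu hv => erw [map_add, map_add, hu, hv, map_add]

lemma PhiL_PhiInv (z : Module.DirectLimit (FPull R p N) (FPullChain R p N φ)) :
    PhiL p φ (PhiInv p φ z) = z := by
  induction z using Module.DirectLimit.induction_on with
  | ih e x => erw [PhiInv_of, PhiL_map_of, of_step]

lemma PhiInv_PhiL (t : FStarT R p (Module.DirectLimit (FPull R p N) (FPullChain R p N φ))) :
    PhiInv p φ (PhiL p φ t) = t := by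
  induction t using TensorProduct.induction_on with
  | zero => erw [map_zero]; rfl
  | tmul a m =>
    induction m using Module.DirectLimit.induction_on with
    | ih e x =>
      have h1 : PhiL p φ (a ⊗ₜ[R] Module.DirectLimit.of R ℕ (FPull R p N) (FPullChain R p N φ) e x)
          = Module.DirectLimit.of R ℕ (FPull R p N) (FPullChain R p N φ) (e+1) (a ⊗ₜ[R] x) :=
        Phi0_tmul_of p φ a e x
      erw [h1, PhiInv_of]
      have h2 : FPullMap R p N φ (e+1) (a ⊗ₜ[R] x)
          = a ⊗ₜ[R] (FPullMap R p N φ e x) := rfl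
      rw [h2, FStarT_map_tmul, of_step]
  | add u v hu hv => erw [map_add, map_add, hu, hv]; rfl

end Inv

/-- Let `R` have characteristic `p` and let `N` be an `R`-module with an
injective map `φ : N → F^*N` into its Frobenius pullback.  Let `M = colim_e F^{e*}N` be the
colimit of the direct system with transition maps the Frobenius pullbacks of `φ`.  Then `φ`
induces an `R`-linear isomorphism `Φ : F^*M ≅ M`, sending `a ⊗ [x]_e ↦ [a ⊗ x]_{e+1}`. -/
theorem root_colimit_unit_isomorphism
    {R N : Type u} [CommRing R] [AddCommGroup N] [Module R N]
    (p : ℕ) [Fact p.Prime] [CharP R p]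
    (φ : N →ₗ[R] FStarT R p N) (hφ : Function.Injective φ) :
    ∃ Φ : FStarT R p (Module.DirectLimit (FPull R p N) (FPullChain R p N φ)) ≃ₗ[R]
        Module.DirectLimit (FPull R p N) (FPullChain R p N φ),
      ∀ (e : ℕ) (a : FrobTwist R p) (x : FPull R p N e),
        Φ (a ⊗ₜ[R] (Module.DirectLimit.of R ℕ (FPull R p N) (FPullChain R p N φ) e x)) =
          Module.DirectLimit.of R ℕ (FPull R p N) (FPullChain R p N φ) (e + 1)
            ((a ⊗ₜ[R] x : FStarT R p (FPull R p N e))) := by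
  refine ⟨LinearEquiv.ofLinear (PhiL p φ) (PhiInv p φ)
    (LinearMap.ext (PhiL_PhiInv p φ)) (LinearMap.ext (PhiInv_PhiL p φ)), ?_⟩
  intro e a x
  exact Phi0_tmul_of p φ a e x
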